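/- Fix k ≥ 1. Let I_{k,k} = Σ_{t≥k+1} A·R⁰_{k,t} + A·x₁ in A = ℂ[x₁,x₂,…] and I'_{k,k} = Σ_{t ≥ 2(k+1)} B·R¹_{k,t} in B = ℂ[x₂,x₃,…]. Then I_{k,k} = I'_{k,k} ⊕ A·x₁ as a direct sum of vector subspaces of A, and the projection ρ: A → B along A·x₁ satisfies ρ(I_{k,k}) = I'_{k,k}. -/

import Mathlib

open MvPolynomial

noncomputable section

abbrev A : Type := MvPolynomial ℕ+ ℂ

/-- weight function: `x_m` has weight `m`. -/
def wtA : ℕ+ → ℕ := fun m => (m : ℕ)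

/-- the index-shift map `τ : x_m ↦ x_{m+1}` (multiplicative on monomials). -/
def tau : A →ₐ[ℂ] A := rename (fun m => m + 1)

/-- `B = ℂ[x₂, x₃, …]`, the subalgebra generated by the variables `x_m`, `m ≥ 2`. -/
def BB : Subalgebra ℂ A := Algebra.adjoin ℂ {p : A | ∃ m : ℕ+, 2 ≤ m ∧ p = X m}

/-- `R⁰_{k,t}`: sum over ordered `(k+1)`-tuples of integers `≥ 1` summing to `t`. -/
def R0 (k t : ℕ) : A :=
  ∑ m ∈ (Finset.Nat.antidiagonalTuple (k+1) t).filter (fun m => ∀ i, 1 ≤ m i),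
    ∏ i, X ((m i).toPNat')

/-- `R¹_{k,t}`: sum over ordered `(k+1)`-tuples of integers `≥ 2` summing to `t`. -/
def R1 (k t : ℕ) : A :=
  ∑ m ∈ (Finset.Nat.antidiagonalTuple (k+1) t).filter (fun m => ∀ i, 2 ≤ m i),
    ∏ i, X ((m i).toPNat')

/-- the projection `ρ : A → B` along `A·x₁` (set `x₁ = 0`). -/
def rho : A →ₐ[ℂ] A := aeval (fun m : ℕ+ => if m = 1 then 0 else X m)

/-- `I_{k,0} = Σ_{t ≥ k+1} A·R⁰_{k,t}`. -/
def Ik0 (k : ℕ) : Ideal A := Ideal.span {p : A | ∃ t, k + 1 ≤ t ∧ p = R0 k t}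

/-- `I_{k,i} = Σ_{t ≥ k+1} A·R⁰_{k,t} + A·x₁^{k-i+1}`. -/
def Ik (k i : ℕ) : Ideal A := Ik0 k ⊔ Ideal.span {X 1 ^ (k - i + 1)}

/-- `I'_{k,k} = Σ_{t ≥ 2(k+1)} B·R¹_{k,t}` as a ℂ-subspace of `A`. -/
def Ipkk (k : ℕ) : Submodule ℂ A :=
  Submodule.span ℂ {p : A | ∃ t, 2*(k+1) ≤ t ∧ ∃ b ∈ BB, p = b * R1 k t}

end

-- auxiliary lemmas

lemma two_le_pnat_of_ne_one {n : ℕ+} (h : n ≠ 1) : (2:ℕ+) ≤ n := by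
  have h1 : (1:ℕ+) < n := lt_of_le_of_ne n.one_le (Ne.symm h)
  have h2 : (2:ℕ+) = 1 + 1 := rfl
  rw [h2]
  exact PNat.add_one_le_iff.mpr h1

lemma two_le_toPNat' {n : ℕ} (h : 2 ≤ n) : (2:ℕ+) ≤ n.toPNat' := by
  rw [← PNat.coe_le_coe, PNat.toPNat'_coe (by omega : 0 < n)]
  simpa using h

lemma toPNat'_ne_one {n : ℕ} (h : 2 ≤ n) : n.toPNat' ≠ 1 := by
  intro hh
  have := two_le_toPNat' h
  rw [hh] at this
  exact absurd this (by norm_num)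

lemma rho_X (m : ℕ+) : rho (X m) = if m = 1 then 0 else X m := by
  simp [rho, aeval_X]

lemma rho_fix {b : A} (hb : b ∈ BB) : rho b = b := by
  induction hb using Algebra.adjoin_induction with
  | mem p hp =>
      obtain ⟨m, hm, rfl⟩ := hp
      rw [rho_X, if_neg]
      intro h; rw [h] at hm; exact absurd hm (by norm_num)
  | algebraMap r => simp [rho]
  | add x y _ _ hx hy => rw [map_add, hx, hy]
  | mul x y _ _ hx hy => rw [map_mul, hx, hy]

lemma rho_mem_BB (p : A) : rho p ∈ BB := by
  induction p using MvPolynomial.induction_on with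
  | C a => simpa [rho] using Subalgebra.algebraMap_mem BB a
  | add p q hp hq => rw [map_add]; exact add_mem hp hq
  | mul_X p n hp =>
      rw [map_mul]
      refine mul_mem hp ?_
      rw [rho_X]
      split_ifs with h
      · exact zero_mem _
      · exact Algebra.subset_adjoin ⟨n, two_le_pnat_of_ne_one h, rfl⟩

lemma sub_rho_mem (p : A) : p - rho p ∈ Ideal.span {(X 1 : A)} := by
  induction p using MvPolynomial.induction_on with
  | C a => simp [rho]
  | add p q hp hq =>
      rw [map_add]
      have : p + q - (rho p + rho q) = (p - rho p) + (q - rho q) := by ring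
      rw [this]; exact add_mem hp hq
  | mul_X p n hp =>
      rw [map_mul, rho_X]
      by_cases h : n = 1
      · rw [if_pos h, mul_zero, sub_zero, h]
        exact Ideal.mul_mem_left _ _ (Ideal.subset_span rfl)
      · rw [if_neg h]
        have : p * X n - rho p * X n = (p - rho p) * X n := by ring
        rw [this]; exact Ideal.mul_mem_right _ _ hp

lemma rho_X1_ideal {p : A} (hp : p ∈ Ideal.span {(X 1 : A)}) : rho p = 0 := by
  rw [Ideal.mem_span_singleton] at hp
  obtain ⟨c, rfl⟩ := hp
  rw [map_mul, rho_X, if_pos rfl, zero_mul]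

lemma R1_mem_BB (k t : ℕ) : R1 k t ∈ BB := by
  refine Subalgebra.sum_mem _ fun m hm => Subalgebra.prod_mem _ fun i _ => ?_
  rw [Finset.mem_filter] at hm
  exact Algebra.subset_adjoin ⟨(m i).toPNat', two_le_toPNat' (hm.2 i), rfl⟩

lemma rho_R0 (k t : ℕ) : rho (R0 k t) = R1 k t := by
  rw [R0, map_sum]
  rw [← Finset.sum_filter_add_sum_filter_not _ (fun m : Fin (k+1) → ℕ => ∀ i, 2 ≤ m i)]
  have h2 : ∀ m ∈ (Finset.Nat.antidiagonalTuple (k+1) t).filter (fun m => ∀ i, 1 ≤ m i)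
      |>.filter (fun m => ¬ ∀ i, 2 ≤ m i), rho (∏ i, X ((m i).toPNat')) = 0 := by
    intro m hm
    simp only [Finset.mem_filter] at hm
    push_neg at hm
    obtain ⟨⟨_, h1⟩, i, hi⟩ := hm
    rw [map_prod]
    refine Finset.prod_eq_zero (Finset.mem_univ i) ?_
    have h2i : m i = 1 := by have := h1 i; omega
    rw [rho_X, if_pos (show (m i).toPNat' = 1 by rw [h2i]; rfl)]
  rw [Finset.sum_eq_zero h2, add_zero]
  rw [Finset.filter_filter]
  rw [R1]
  rw [Finset.filter_congr (fun m _ => by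
    constructor
    · rintro ⟨_, h⟩; exact h
    · intro h; exact ⟨fun i => by have := h i; omega, h⟩)]
  refine Finset.sum_congr rfl fun m hm => ?_
  rw [Finset.mem_filter] at hm
  rw [map_prod]
  refine Finset.prod_congr rfl fun i _ => ?_
  rw [rho_X, if_neg (toPNat'_ne_one (hm.2 i))]

lemma R1_eq_zero {k t : ℕ} (ht : t < 2*(k+1)) : R1 k t = 0 := by
  rw [R1, Finset.sum_eq_zero]
  intro m hm
  exfalso
  rw [Finset.mem_filter, Finset.Nat.mem_antidiagonalTuple] at hm
  have : 2 * (k+1) ≤ ∑ i, m i := by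
    calc 2*(k+1) = ∑ _i : Fin (k+1), 2 := by simp [Finset.sum_const, mul_comm]
    _ ≤ ∑ i, m i := Finset.sum_le_sum fun i _ => hm.2 i
  omega

lemma Ipkk_mul_mem {k : ℕ} {c x : A} (hc : c ∈ BB) (hx : x ∈ Ipkk k) : c * x ∈ Ipkk k := by
  induction hx using Submodule.span_induction with
  | mem p hp =>
      obtain ⟨t, ht, b, hb, rfl⟩ := hp
      exact Submodule.subset_span ⟨t, ht, c * b, mul_mem hc hb, (mul_assoc _ _ _).symm⟩
  | zero => rw [mul_zero]; exact zero_mem _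
  | add x y _ _ hx hy => rw [mul_add]; exact add_mem hx hy
  | smul a x _ hx => rw [mul_smul_comm]; exact Submodule.smul_mem _ _ hx

lemma rho_fix_Ipkk {k : ℕ} {x : A} (hx : x ∈ Ipkk k) : rho x = x := by
  induction hx using Submodule.span_induction with
  | mem p hp =>
      obtain ⟨t, ht, b, hb, rfl⟩ := hp
      rw [map_mul, rho_fix hb, rho_fix (R1_mem_BB k t)]
  | zero => exact map_zero _
  | add x y _ _ hx hy => rw [map_add, hx, hy]
  | smul a x _ hx => rw [map_smul, hx]

lemma restrictScalars_sup' (P Q : Ideal A) :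
    (P ⊔ Q).restrictScalars ℂ = P.restrictScalars ℂ ⊔ Q.restrictScalars ℂ := by
  ext x
  simp only [Submodule.restrictScalars_mem]
  rw [Submodule.mem_sup, Submodule.mem_sup]
  simp only [Submodule.restrictScalars_mem]

theorem stmt11 (k : ℕ) (hk : 1 ≤ k) :
    (Ik k k).restrictScalars ℂ = Ipkk k ⊔ ((Ideal.span {X 1} : Ideal A).restrictScalars ℂ) ∧
    Disjoint (Ipkk k) ((Ideal.span {X 1} : Ideal A).restrictScalars ℂ) ∧
    Submodule.map rho.toLinearMap ((Ik k k).restrictScalars ℂ) = Ipkk k := by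
  have hIk : Ik k k = Ik0 k ⊔ Ideal.span {(X 1 : A)} := by
    rw [Ik, Nat.sub_self, pow_one]
  have hIk0le : (Ik0 k).restrictScalars ℂ ≤ Ipkk k ⊔ ((Ideal.span {X 1} : Ideal A).restrictScalars ℂ) := by
    intro x hx
    rw [Submodule.restrictScalars_mem] at hx
    induction hx using Submodule.span_induction with
    | mem p hp =>
        obtain ⟨t, ht, rfl⟩ := hp
        rcases lt_or_ge t (2*(k+1)) with h | h
        · refine Submodule.mem_sup_right ?_
          rw [Submodule.restrictScalars_mem]
          have := sub_rho_mem (R0 k t)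
          rwa [rho_R0, R1_eq_zero h, sub_zero] at this
        · have h1 : R1 k t ∈ Ipkk k :=
            Submodule.subset_span ⟨t, h, 1, one_mem _, (one_mul _).symm⟩
          have h2 : R0 k t - R1 k t ∈ Ideal.span {(X 1 : A)} := by
            have := sub_rho_mem (R0 k t); rwa [rho_R0] at this
          have : R0 k t = R1 k t + (R0 k t - R1 k t) := by ring
          rw [this]
          exact Submodule.add_mem _ (Submodule.mem_sup_left h1) (Submodule.mem_sup_right h2)
    | zero => exact zero_mem _
    | add x y _ _ hx hy => exact add_mem hx hy
    | smul a x _ hx =>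
        rw [Submodule.mem_sup] at hx ⊢
        obtain ⟨y, hy, z, hz, rfl⟩ := hx
        rw [Submodule.restrictScalars_mem] at hz
        have : a • (y + z) = rho a * y + ((a - rho a) * y + a * z) := by
          simp only [smul_eq_mul]; ring
        rw [this]
        refine ⟨rho a * y, Ipkk_mul_mem (rho_mem_BB a) hy, (a - rho a) * y + a * z, ?_, rfl⟩
        rw [Submodule.restrictScalars_mem]
        exact add_mem (Ideal.mul_mem_right _ _ (sub_rho_mem a)) (Ideal.mul_mem_left _ _ hz)
  have heq : (Ik k k).restrictScalars ℂ = Ipkk k ⊔ ((Ideal.span {X 1} : Ideal A).restrictScalars ℂ) := by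
    rw [hIk, restrictScalars_sup']
    apply le_antisymm
    · exact sup_le hIk0le le_sup_right
    · refine sup_le ?_ le_sup_right
      intro x hx
      induction hx using Submodule.span_induction with
      | mem p hp =>
          obtain ⟨t, ht, b, hb, rfl⟩ := hp
          have h2 : R0 k t - R1 k t ∈ Ideal.span {(X 1 : A)} := by
            have := sub_rho_mem (R0 k t); rwa [rho_R0] at this
          have heq2 : b * R1 k t = b * R0 k t - b * (R0 k t - R1 k t) := by ring
          rw [heq2]
          refine sub_mem ?_ ?_
          · exact Submodule.mem_sup_left
              (Ideal.mul_mem_left _ _ (Ideal.subset_span ⟨t, by omega, rfl⟩))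
          · exact Submodule.mem_sup_right (Ideal.mul_mem_left _ _ h2)
      | zero => exact zero_mem _
      | add x y _ _ hx hy => exact add_mem hx hy
      | smul a x _ hx => exact Submodule.smul_mem _ _ hx
  refine ⟨heq, ?_, ?_⟩
  · rw [Submodule.disjoint_def]
    intro x hx1 hx2
    rw [Submodule.restrictScalars_mem] at hx2
    have := rho_fix_Ipkk hx1
    rw [rho_X1_ideal hx2] at this
    exact this.symm
  · apply le_antisymm
    · rw [Submodule.map_le_iff_le_comap]
      intro x hx
      rw [Submodule.mem_comap]
      rw [Submodule.restrictScalars_mem, hIk, Submodule.mem_sup] at hx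
      obtain ⟨y, hy, z, hz, rfl⟩ := hx
      show rho (y + z) ∈ Ipkk k
      rw [map_add, rho_X1_ideal hz, add_zero]
      clear hz heq hIk0le
      induction hy using Submodule.span_induction with
      | mem p hp =>
          obtain ⟨t, ht, rfl⟩ := hp
          rw [rho_R0]
          rcases lt_or_ge t (2*(k+1)) with h | h
          · rw [R1_eq_zero h]; exact zero_mem _
          · exact Submodule.subset_span ⟨t, h, 1, one_mem _, (one_mul _).symm⟩
      | zero => rw [map_zero]; exact zero_mem _
      | add x y _ _ hx hy => rw [map_add]; exact add_mem hx hy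
      | smul a x _ hx => rw [smul_eq_mul, map_mul]; exact Ipkk_mul_mem (rho_mem_BB a) hx
    · rw [Ipkk, Submodule.span_le]
      rintro _ ⟨t, ht, b, hb, rfl⟩
      refine ⟨b * R0 k t, ?_, ?_⟩
      · show b * R0 k t ∈ (Ik k k).restrictScalars ℂ
        rw [Submodule.restrictScalars_mem, hIk]
        exact Submodule.mem_sup_left
          (Ideal.mul_mem_left _ _ (Ideal.subset_span ⟨t, by omega, rfl⟩))
      · show rho (b * R0 k t) = b * R1 k t
        rw [map_mul, rho_fix hb, rho_R0]
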